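/- There exists an absolute constant c > 0 such that for every integer t ≥ 1 there exists k₀(t) with the property: for every k ≥ k₀(t) there exist an integer n with n ≤ k + c·t²·log₂ k and a set C ⊆ {0,1}^n with |C| ≥ 2^k that corrects any t symmetric composition errors, i.e., for any two distinct s, v ∈ C there is no multiset D that is simultaneously the result of at most t composition errors in C(s) and the result of at most t composition errors in C(v). -/

import Mathlib

/-- The composition of a binary string: the pair (number of 0s, number of 1s).
Here `false` represents the bit 0 and `true` the bit 1. -/
def comp (w : List Bool) : ℕ × ℕ := (w.count false, w.count true)

/-- The multiset of compositions of all contiguous substrings of `s` of length `l`. -/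
def compLen (l : ℕ) (s : List Bool) : Multiset (ℕ × ℕ) :=
  ↑((List.range (s.length + 1 - l)).map fun i => comp ((s.drop i).take l))

/-- The composition multiset `C(s)`: compositions of all contiguous substrings of `s`. -/
def compMS (s : List Bool) : Multiset (ℕ × ℕ) :=
  ↑((List.range s.length).flatMap fun i =>
    (List.range (s.length - i)).map fun j => comp ((s.drop i).take (j + 1)))

/-- A single composition error: one element `(z,w)` of `M` is replaced by a
pair `(z',w')` with the same length `z'+w' = z+w`. -/
def OneErr (M M' : Multiset (ℕ × ℕ)) : Prop :=
  ∃ z w z' w' : ℕ, (z, w) ∈ M ∧ z + w = z' + w' ∧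
    M' = M - {(z, w)} + {(z', w')}

/-- `AtMostErr t M D`: `D` is obtained from `M` by at most `t` composition errors. -/
def AtMostErr : ℕ → Multiset (ℕ × ℕ) → Multiset (ℕ × ℕ) → Prop
  | 0, M, D => M = D
  | t + 1, M, D => M = D ∨ ∃ M', OneErr M M' ∧ AtMostErr t M' D

/-- The sub-multiset of elements (compositions) of length `l`. -/
def lenPart (l : ℕ) (M : Multiset (ℕ × ℕ)) : Multiset (ℕ × ℕ) :=
  M.filter fun p => p.1 + p.2 = l

/-- `D` is the result of at most `t` *asymmetric* composition errors in `C(s)`,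
for a string of length `n`: additionally, for each `1 ≤ i ≤ ⌊n/2⌋`, at most one
of the two sub-multisets of lengths `i` and `n+1-i` is altered. -/
def AsymErr (t n : ℕ) (s : List Bool) (D : Multiset (ℕ × ℕ)) : Prop :=
  AtMostErr t (compMS s) D ∧
  ∀ i, 1 ≤ i → i ≤ n / 2 →
    lenPart i D ≠ compLen i s → lenPart (n + 1 - i) D = compLen (n + 1 - i) s

/-- A Catalan-Bertrand string: every nonempty prefix has strictly more 0s than 1s. -/
def IsCB (w : List Bool) : Prop :=
  ∀ j, 1 ≤ j → j ≤ w.length → (w.take j).count true < (w.take j).count false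

/-- The reconstruction code `S_R(n)` for even `n`: `s_1 = 0`, `s_n = 1`, and the
subsequence of `s` indexed by the positions `i ∈ {1,…,n/2}` with `s_i ≠ s_{n+1-i}`
(in increasing order) is a Catalan-Bertrand string (indices here are 0-based). -/
def SReven (n : ℕ) : Set (List Bool) :=
  { s | s.length = n ∧ s.getD 0 false = false ∧ s.getD (n - 1) false = true ∧
    IsCB (((List.range (n / 2)).filter fun i =>
        s.getD i false != s.getD (n - 1 - i) false).map fun i => s.getD i false) }

/-- The reconstruction code `S_R(n)`: for odd `n`, obtained from `S_R(n-1)` by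
inserting an arbitrary middle bit. -/
def SR (n : ℕ) : Set (List Bool) :=
  if Even n then SReven n
  else { s | ∃ v ∈ SReven (n - 1), ∃ b : Bool,
      s = v.take ((n - 1) / 2) ++ [b] ++ v.drop ((n - 1) / 2) }

/-- The cumulative weight `w_l(s)`: total number of 1s over all length-`l`
contiguous substrings of `s`. -/
def cumW (l : ℕ) (s : List Bool) : ℕ :=
  ∑ i ∈ Finset.range (s.length + 1 - l), ((s.drop i).take l).count true

/-- `σ_i(s) = s_i + s_{n+1-i}` for `1 ≤ i ≤ ⌊n/2⌋`, and `σ_{⌈n/2⌉}(s) = s_{⌈n/2⌉}`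
for odd `n` (1-based indexing in the mathematical description). -/
def sigmaSeq (s : List Bool) (i : ℕ) : ℕ :=
  if 2 * i ≤ s.length then
    (if s.getD (i - 1) false then 1 else 0) +
      (if s.getD (s.length - i) false then 1 else 0)
  else (if s.getD (i - 1) false then 1 else 0)



namespace CompCode

/-- prefix count of `true` among the first `m` entries, as an integer. -/
def pc (s : List Bool) (m : ℕ) : ℤ := ((s.take m).count true : ℤ)

/-- suffix count of `true` among the last `m` entries, as an integer. -/
def sc (s : List Bool) (m : ℕ) : ℤ := ((s.drop (s.length - m)).count true : ℤ)

lemma pc_add (s : List Bool) (i l : ℕ) :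
    pc s (i + l) = pc s i + (((s.drop i).take l).count true : ℤ) := by
  unfold pc
  rw [List.take_add, List.count_append]
  push_cast; ring

lemma pc_length (s : List Bool) : pc s s.length = (s.count true : ℤ) := by
  unfold pc; rw [List.take_length]

lemma pc_sc (s : List Bool) {m : ℕ} (hm : m ≤ s.length) :
    pc s (s.length - m) + sc s m = pc s s.length := by
  have := List.take_append_drop (s.length - m) s
  have hc : ((s.take (s.length - m)).count true) + ((s.drop (s.length - m)).count true)
      = s.count true := by
    conv_rhs => rw [← this]
    rw [List.count_append]
  unfold pc sc
  rw [List.take_length]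
  push_cast [← hc]; ring

lemma pc_zero (s : List Bool) : pc s 0 = 0 := by simp [pc]

lemma sc_zero (s : List Bool) : sc s 0 = 0 := by simp [sc]

lemma sc_length (s : List Bool) : sc s s.length = (s.count true : ℤ) := by simp [sc]

/-- the weight of the window starting at `a` of length `length - m`, for `a ≤ m`. -/
lemma window_weight (s : List Bool) {m a : ℕ} (hm : m ≤ s.length) (ha : a ≤ m) :
    (((s.drop a).take (s.length - m)).count true : ℤ)
      = pc s s.length - sc s (m - a) - pc s a := by
  have h1 : a + (s.length - m) = s.length - (m - a) := by omega
  have h2 := pc_add s a (s.length - m)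
  rw [h1] at h2
  have h3 := pc_sc s (show m - a ≤ s.length by omega)
  linarith

lemma pc_mono (s : List Bool) {a b : ℕ} (h : a ≤ b) : pc s a ≤ pc s b := by
  have hb : b = a + (b - a) := by omega
  rw [hb, pc_add]
  have : (0:ℤ) ≤ (((s.drop a).take (b-a)).count true : ℤ) := by positivity
  linarith

lemma pc_nonneg (s : List Bool) (a : ℕ) : 0 ≤ pc s a := by
  simpa [pc_zero] using pc_mono s (Nat.zero_le a)

lemma pc_le (s : List Bool) (a : ℕ) : pc s a ≤ a := by
  unfold pc
  have := List.count_le_length (l := s.take a) (a := true)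
  have h2 : (s.take a).length = min a s.length := List.length_take
  have : (s.take a).count true ≤ a := le_trans this (by omega)
  exact_mod_cast this

lemma sc_nonneg (s : List Bool) (a : ℕ) : 0 ≤ sc s a := by
  unfold sc; positivity

/-- symmetry: `pc (n-j) - sc (n-j) = pc j - sc j`. -/
lemma dom_symm (s : List Bool) {j : ℕ} (hj : j ≤ s.length) :
    pc s (s.length - j) - sc s (s.length - j) = pc s j - sc s j := by
  have h1 := pc_sc s hj
  have h2 := pc_sc s (show s.length - j ≤ s.length by omega)
  have h3 : s.length - (s.length - j) = j := by omega
  rw [h3] at h2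
  linarith

/-- two bool lists with the same length and the same prefix counts are equal -/
lemma eq_of_pc_eq : ∀ (s v : List Bool), s.length = v.length →
    (∀ m, pc s m = pc v m) → s = v := by
  intro s
  induction s with
  | nil =>
    intro v hl _
    have : v.length = 0 := by simpa using hl.symm
    exact (List.length_eq_zero_iff.mp this).symm
  | cons a s ih =>
    intro v hl hpc
    cases v with
    | nil => simp at hl
    | cons b v =>
      have h1 := hpc 1
      have hab : a = b := by
        by_contra hne
        cases a <;> cases b <;> simp_all [pc, List.count_cons]
      subst hab
      have : s = v := by
        apply ih v (by simpa using hl)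
        intro m
        have := hpc (m + 1)
        have hs : pc (a :: s) (m+1) = (if a then 1 else 0) + pc s m := by
          cases a <;> simp [pc, List.count_cons] <;> push_cast <;> ring
        have hv : pc (a :: v) (m+1) = (if a then 1 else 0) + pc v m := by
          cases a <;> simp [pc, List.count_cons] <;> push_cast <;> ring
        rw [hs, hv] at this
        linarith
      rw [this]


lemma comp_len (w : List Bool) : (comp w).1 + (comp w).2 = w.length := by
  unfold comp
  simp only []
  induction w with
  | nil => simp
  | cons a t ih => cases a <;> simp [List.count_cons] <;> omega

lemma flatMap_singleton {α β : Type*} (L : List α) (f : α → β) :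
    L.flatMap (fun i => [f i]) = L.map f := by
  induction L with
  | nil => rfl
  | cons a t ih => simp [List.flatMap_cons, ih]

lemma flatMap_nil {α β : Type*} (L : List α) (f : α → List β) (h : ∀ i ∈ L, f i = []) :
    L.flatMap f = [] := by
  induction L with
  | nil => rfl
  | cons a t ih =>
    simp [List.flatMap_cons, h a (by simp), ih (fun i hi => h i (by simp [hi]))]

lemma filter_range_single {m a : ℕ} (h : a < m) :
    (List.range m).filter (fun j => decide (j = a)) = [a] := by
  induction m with
  | zero => omega
  | succ m ih =>
    rw [List.range_succ, List.filter_append]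
    rcases Nat.lt_or_ge a m with h' | h'
    · rw [ih h']
      have : (List.filter (fun j => decide (j = a)) [m]) = [] := by
        simp; omega
      simp [this]
    · have ham : a = m := by omega
      subst ham
      have h1 : (List.filter (fun j => decide (j = a)) [a]) = [a] := by simp
      have h2 : (List.range a).filter (fun j => decide (j = a)) = [] := by
        apply List.filter_eq_nil_iff.mpr
        intro b hb
        simp at hb ⊢
        omega
      rw [h1, h2]; rfl

/-- the key structural fact: the length-`l` part of the composition multiset consists
of the compositions of the length-`l` windows. -/
lemma lenPart_compMS (s : List Bool) {l : ℕ} (h1 : 1 ≤ l) (h2 : l ≤ s.length) :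
    lenPart l (compMS s) = compLen l s := by
  classical
  set n := s.length with hn
  unfold lenPart compMS compLen
  rw [Multiset.filter_coe]
  congr 1
  rw [List.filter_flatMap]
  have key : ∀ i < n, ((List.range (n - i)).map fun j => comp ((s.drop i).take (j + 1))).filter
      (fun p => decide (p.1 + p.2 = l)) = if l ≤ n - i then [comp ((s.drop i).take l)] else [] := by
    intro i hi
    rw [List.filter_map]
    have hcong : ∀ j ∈ List.range (n - i),
        ((fun p => decide (p.1 + p.2 = l)) ∘ (fun j => comp ((s.drop i).take (j + 1)))) j
        = decide (j = l - 1) := by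
      intro j hj
      simp only [Function.comp_apply]
      rw [comp_len]
      have hlen : ((s.drop i).take (j+1)).length = j + 1 := by
        rw [List.length_take, List.length_drop]
        simp at hj
        omega
      rw [hlen]
      simp only [decide_eq_decide]
      omega
    rw [List.filter_congr hcong]
    rcases Nat.lt_or_ge (l - 1) (n - i) with h' | h'
    · rw [filter_range_single h']
      have : l ≤ n - i := by omega
      rw [if_pos this]
      have hl1 : l - 1 + 1 = l := by omega
      simp only [List.map_cons, List.map_nil, hl1]
    · have hnil : (List.range (n - i)).filter (fun j => decide (j = l - 1)) = [] := by
        apply List.filter_eq_nil_iff.mpr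
        intro b hb
        simp at hb ⊢
        omega
      rw [hnil, if_neg (by omega)]
      rfl
  have hsplit : n = (n + 1 - l) + (l - 1) := by omega
  rw [show List.range n = List.range ((n+1-l) + (l-1)) by rw [← hsplit], List.range_add,
    List.flatMap_append]
  have hpart2 : (List.map (fun x => n + 1 - l + x) (List.range (l - 1))).flatMap
      (fun i => ((List.range (n - i)).map fun j => comp ((s.drop i).take (j + 1))).filter
        (fun p => decide (p.1 + p.2 = l))) = [] := by
    apply flatMap_nil
    intro i hi
    simp only [List.mem_map, List.mem_range] at hi
    obtain ⟨x, hx, rfl⟩ := hi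
    rw [key _ (by omega), if_neg (by omega)]
  rw [hpart2, List.append_nil]
  have hpart1 : (List.range (n + 1 - l)).flatMap
      (fun i => ((List.range (n - i)).map fun j => comp ((s.drop i).take (j + 1))).filter
        (fun p => decide (p.1 + p.2 = l)))
      = (List.range (n + 1 - l)).flatMap (fun i => [comp ((s.drop i).take l)]) := by
    apply List.flatMap_congr  -- might not exist
    intro i hi
    simp only [List.mem_range] at hi
    rw [key _ (by omega), if_pos (by omega)]
  rw [hpart1, flatMap_singleton]


/-- sum of squared weights of the length-`l` windows -/
def vW (l : ℕ) (s : List Bool) : ℕ :=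
  ∑ i ∈ Finset.range (s.length + 1 - l), (((s.drop i).take l).count true) ^ 2

lemma sum_range_list {β : Type*} [AddCommMonoid β] (k : ℕ) (f : ℕ → β) :
    ∑ i ∈ Finset.range k, f i = ((List.range k).map f).sum := rfl

lemma cumW_eq_stat (s : List Bool) {l : ℕ} (h1 : 1 ≤ l) (h2 : l ≤ s.length) :
    (cumW l s : ℕ) = ((lenPart l (compMS s)).map fun p => p.2).sum := by
  rw [lenPart_compMS s h1 h2]
  unfold compLen cumW
  rw [Multiset.map_coe, Multiset.sum_coe, List.map_map, sum_range_list]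
  rfl

lemma vW_eq_stat (s : List Bool) {l : ℕ} (h1 : 1 ≤ l) (h2 : l ≤ s.length) :
    (vW l s : ℕ) = ((lenPart l (compMS s)).map fun p => p.2 ^ 2).sum := by
  rw [lenPart_compMS s h1 h2]
  unfold compLen vW
  rw [Multiset.map_coe, Multiset.sum_coe, List.map_map, sum_range_list]
  rfl

lemma stats_eq_of_lenPart_eq (s v : List Bool) {l : ℕ} (h1 : 1 ≤ l)
    (h2 : l ≤ s.length) (h3 : l ≤ v.length)
    (h : lenPart l (compMS s) = lenPart l (compMS v)) :
    cumW l s = cumW l v ∧ vW l s = vW l v := by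
  constructor
  · rw [cumW_eq_stat s h1 h2, cumW_eq_stat v h1 h3, h]
  · rw [vW_eq_stat s h1 h2, vW_eq_stat v h1 h3, h]

lemma window_le (s : List Bool) (i l : ℕ) :
    ((s.drop i).take l).count true ≤ s.length := by
  calc ((s.drop i).take l).count true ≤ ((s.drop i).take l).length :=
        List.count_le_length
    _ ≤ s.length := by rw [List.length_take, List.length_drop]; omega

lemma cumW_le (s : List Bool) {l : ℕ} (h1 : 1 ≤ l) : cumW l s ≤ s.length * s.length := by
  unfold cumW
  calc ∑ i ∈ Finset.range (s.length + 1 - l), ((s.drop i).take l).count true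
      ≤ ∑ _i ∈ Finset.range (s.length + 1 - l), s.length :=
        Finset.sum_le_sum (fun i _ => window_le s i l)
    _ = (s.length + 1 - l) * s.length := by
        rw [Finset.sum_const, smul_eq_mul, Finset.card_range]
    _ ≤ _ := Nat.mul_le_mul_right _ (by omega)

lemma vW_le (s : List Bool) {l : ℕ} (h1 : 1 ≤ l) :
    vW l s ≤ s.length * s.length * s.length := by
  unfold vW
  calc ∑ i ∈ Finset.range (s.length + 1 - l), (((s.drop i).take l).count true) ^ 2
      ≤ ∑ _i ∈ Finset.range (s.length + 1 - l), s.length * s.length :=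
        Finset.sum_le_sum (fun i _ => by
          have := window_le s i l
          calc (((s.drop i).take l).count true) ^ 2
              = ((s.drop i).take l).count true * ((s.drop i).take l).count true := sq _
            _ ≤ s.length * s.length := Nat.mul_le_mul this this)
    _ = (s.length + 1 - l) * (s.length * s.length) := by
        rw [Finset.sum_const, smul_eq_mul, Finset.card_range]
    _ ≤ s.length * (s.length * s.length) := Nat.mul_le_mul_right _ (by omega)
    _ = _ := by ring


lemma lenPart_oneErr {M M' : Multiset (ℕ × ℕ)} (h : OneErr M M') :
    ∃ c : ℕ, ∀ l ≠ c, lenPart l M' = lenPart l M := by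
  obtain ⟨z, w, z', w', hmem, hlen, rfl⟩ := h
  refine ⟨z + w, fun l hl => ?_⟩
  unfold lenPart
  rw [Multiset.filter_add, Multiset.filter_sub]
  have h1 : Multiset.filter (fun p => p.1 + p.2 = l) ({(z, w)} : Multiset (ℕ × ℕ)) = 0 := by
    rw [Multiset.filter_singleton,
      if_neg (show ¬((z, w).1 + (z, w).2 = l) from by change ¬(z + w = l); omega)]
    rfl
  have h2 : Multiset.filter (fun p => p.1 + p.2 = l) ({(z', w')} : Multiset (ℕ × ℕ)) = 0 := by
    rw [Multiset.filter_singleton,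
      if_neg (show ¬((z', w').1 + (z', w').2 = l) from by change ¬(z' + w' = l); omega)]
    rfl
  rw [h1, h2]
  simp

lemma err_classes {t : ℕ} :
    ∀ {M D : Multiset (ℕ × ℕ)}, AtMostErr t M D →
    ∃ S : Finset ℕ, S.card ≤ t ∧ ∀ l ∉ S, lenPart l M = lenPart l D := by
  induction t with
  | zero =>
    intro M D h
    exact ⟨∅, by simp, fun l _ => by rw [h]⟩
  | succ t ih =>
    intro M D h
    rcases h with rfl | ⟨M', h1, h2⟩
    · exact ⟨∅, by simp, fun l _ => rfl⟩
    · obtain ⟨S, hS, hSl⟩ := ih h2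
      obtain ⟨c, hc⟩ := lenPart_oneErr h1
      refine ⟨insert c S, le_trans (Finset.card_insert_le _ _) (by omega), fun l hl => ?_⟩
      simp only [Finset.mem_insert, not_or] at hl
      rw [← hc l hl.1, hSl l hl.2]

/-- integer interpolation: a vector with small support and vanishing power sums is zero -/
lemma interpolation {d : ℕ} (T : Finset ℕ) (e : ℕ → ℤ) (hcard : T.card ≤ d)
    (hsum : ∀ j < d, ∑ l ∈ T, e l * (l : ℤ) ^ j = 0) : ∀ l ∈ T, e l = 0 := by
  intro l₀ hl₀
  classical
  set g : Polynomial ℤ := ∏ l ∈ T.erase l₀, (Polynomial.X - Polynomial.C (l : ℤ)) with hg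
  have hgne : ∀ l ∈ T.erase l₀, (Polynomial.X - Polynomial.C ((l : ℕ) : ℤ)) ≠ 0 :=
    fun l _ => Polynomial.X_sub_C_ne_zero _
  have hdeg : g.natDegree = (T.erase l₀).card := by
    rw [hg, Polynomial.natDegree_prod _ _ hgne]
    simp only [Polynomial.natDegree_X_sub_C]
    simp
  have hdeg' : g.natDegree < d := by
    rw [hdeg, Finset.card_erase_of_mem hl₀]
    have : 1 ≤ T.card := Finset.card_pos.mpr ⟨l₀, hl₀⟩
    omega
  have hkey : ∑ l ∈ T, e l * g.eval (l : ℤ) = 0 := by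
    have : ∀ l ∈ T, e l * g.eval (l : ℤ)
        = ∑ j ∈ Finset.range (g.natDegree + 1), g.coeff j * (e l * (l : ℤ) ^ j) := by
      intro l _
      rw [Polynomial.eval_eq_sum_range, Finset.mul_sum]
      apply Finset.sum_congr rfl
      intro j _
      ring
    rw [Finset.sum_congr rfl this, Finset.sum_comm]
    apply Finset.sum_eq_zero
    intro j hj
    rw [← Finset.mul_sum, hsum j (by simp at hj; omega), mul_zero]
  have hzero : ∀ l ∈ T, l ≠ l₀ → e l * g.eval (l : ℤ) = 0 := by
    intro l hl hne
    have : g.eval (l : ℤ) = 0 := by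
      rw [hg, Polynomial.eval_prod]
      apply Finset.prod_eq_zero (Finset.mem_erase.mpr ⟨hne, hl⟩)
      simp
    rw [this, mul_zero]
  have hsingle : ∑ l ∈ T, e l * g.eval (l : ℤ) = e l₀ * g.eval (l₀ : ℤ) :=
    Finset.sum_eq_single_of_mem l₀ hl₀ (fun l hl hne => hzero l hl hne)
  have hgl₀ : g.eval (l₀ : ℤ) ≠ 0 := by
    rw [hg, Polynomial.eval_prod]
    apply Finset.prod_ne_zero_iff.mpr
    intro l hl
    simp only [Polynomial.eval_sub, Polynomial.eval_X, Polynomial.eval_C]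
    have : l ≠ l₀ := (Finset.mem_erase.mp hl).1
    intro hcontra
    apply this
    have : (l : ℤ) = (l₀ : ℤ) := by linarith
    exact_mod_cast this
  have := hkey ▸ hsingle
  exact (mul_eq_zero.mp this.symm).resolve_right hgl₀


/-- dominance: every suffix has at most as many `true`s as the corresponding prefix -/
def Dominant (s : List Bool) : Prop := ∀ m ≤ s.length, sc s m ≤ pc s m

lemma pc_stable (s : List Bool) {m : ℕ} (h : s.length ≤ m) : pc s m = pc s s.length := by
  unfold pc
  rw [List.take_of_length_le h, List.take_length]

lemma cumW_full (s : List Bool) : (cumW s.length s : ℤ) = pc s s.length := by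
  unfold cumW
  rw [show s.length + 1 - s.length = 1 by omega, Finset.sum_range_one]
  simp [pc_length]

lemma cumW_formula (s : List Bool) {m : ℕ} (hm : m < s.length) :
    (cumW (s.length - m) s : ℤ)
      = ∑ a ∈ Finset.range (m + 1), (pc s s.length - sc s (m - a) - pc s a) := by
  unfold cumW
  rw [show s.length + 1 - (s.length - m) = m + 1 by omega]
  push_cast
  exact Finset.sum_congr rfl fun a ha =>
    window_weight s (le_of_lt hm) (by simp at ha; omega)

lemma vW_formula (s : List Bool) {m : ℕ} (hm : m < s.length) :
    (vW (s.length - m) s : ℤ)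
      = ∑ a ∈ Finset.range (m + 1), (pc s s.length - sc s (m - a) - pc s a) ^ 2 := by
  unfold vW
  rw [show s.length + 1 - (s.length - m) = m + 1 by omega]
  push_cast
  exact Finset.sum_congr rfl fun a ha => by
    rw [window_weight s (le_of_lt hm) (by simp at ha; omega)]

lemma sq_cancel {a b : ℤ} (ha : 0 ≤ a) (hb : 0 ≤ b) (h : a ^ 2 = b ^ 2) : a = b := by
  nlinarith [sq_nonneg (a - b), sq_nonneg (a + b)]

lemma split_sum (m : ℕ) (hm : 1 ≤ m) (g : ℕ → ℤ) :
    ∑ a ∈ Finset.range (m + 1), g a = g 0 + (∑ a ∈ Finset.Ico 1 m, g a) + g m := by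
  have h1 : ∑ a ∈ Finset.range (m + 1), g a = (∑ a ∈ Finset.range m, g a) + g m :=
    Finset.sum_range_succ g m
  have h2 : ∑ a ∈ Finset.range m, g a = g 0 + ∑ a ∈ Finset.Ico 1 m, g a := by
    rw [Finset.range_eq_Ico]
    exact Finset.sum_eq_sum_Ico_succ_bot hm g
  rw [h1, h2]

theorem unique_of_stats (s v : List Bool) (hn : s.length = v.length)
    (hds : Dominant s) (hdv : Dominant v)
    (hst : ∀ l, 1 ≤ l → l ≤ s.length → (cumW l s = cumW l v ∧ vW l s = vW l v)) :
    s = v := by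
  rcases Nat.eq_zero_or_pos s.length with h0 | hpos
  · rw [List.length_eq_zero_iff.mp h0, List.length_eq_zero_iff.mp (by omega : v.length = 0)]
  have hv : v.length = s.length := hn.symm
  have hw : pc s s.length = pc v s.length := by
    have h := (hst s.length hpos le_rfl).1
    have h1 := cumW_full s
    have h2 := cumW_full v
    rw [hv] at h2
    rw [h] at h1
    rw [← h1]; exact h2
  have main : ∀ m, m ≤ s.length → pc s m = pc v m ∧ sc s m = sc v m := by
    intro m
    induction m using Nat.strong_induction_on with
    | _ m ih =>
      intro hm
      rcases Nat.eq_zero_or_pos m with rfl | hm1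
      · simp [pc_zero, sc_zero]
      rcases eq_or_lt_of_le hm with rfl | hmlt
      · constructor
        · exact hw
        · have e1 : sc s s.length = pc s s.length := by rw [sc_length, pc_length]
          have e2 : sc v s.length = pc v s.length := by
            rw [← hv, sc_length, pc_length]
          rw [e1, e2]; exact hw
      · -- 1 ≤ m < n
        have hcum := (hst (s.length - m) (by omega) (by omega)).1
        have hvw := (hst (s.length - m) (by omega) (by omega)).2
        have hAs := cumW_formula s hmlt
        have hAv := cumW_formula v (show m < v.length by omega)
        rw [hv] at hAv
        have hBs := vW_formula s hmlt
        have hBv := vW_formula v (show m < v.length by omega)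
        rw [hv] at hBv
        rw [← hw] at hAv hBv
        have hA : ∑ a ∈ Finset.range (m + 1), (pc s s.length - sc s (m - a) - pc s a)
            = ∑ a ∈ Finset.range (m + 1), (pc s s.length - sc v (m - a) - pc v a) := by
          rw [← hAs, ← hAv, hcum]
        have hB : ∑ a ∈ Finset.range (m + 1), (pc s s.length - sc s (m - a) - pc s a) ^ 2
            = ∑ a ∈ Finset.range (m + 1), (pc s s.length - sc v (m - a) - pc v a) ^ 2 := by
          rw [← hBs, ← hBv, hvw]
        -- rewrite both sums with split_sum
        rw [split_sum m hm1 _, split_sum m hm1 _] at hA hB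
        have hmid : ∀ a ∈ Finset.Ico 1 m,
            (pc s s.length - sc s (m - a) - pc s a)
              = (pc s s.length - sc v (m - a) - pc v a) := by
          intro a ha
          simp only [Finset.mem_Ico] at ha
          have h1 := (ih a (by omega) (by omega)).1
          have h2 := (ih (m - a) (by omega) (by omega)).2
          rw [h1, h2]
        have hmidsum : ∑ a ∈ Finset.Ico 1 m, (pc s s.length - sc s (m - a) - pc s a)
            = ∑ a ∈ Finset.Ico 1 m, (pc s s.length - sc v (m - a) - pc v a) :=
          Finset.sum_congr rfl hmid
        have hmidsq : ∑ a ∈ Finset.Ico 1 m, (pc s s.length - sc s (m - a) - pc s a) ^ 2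
            = ∑ a ∈ Finset.Ico 1 m, (pc s s.length - sc v (m - a) - pc v a) ^ 2 :=
          Finset.sum_congr rfl fun a ha => by rw [hmid a ha]
        rw [hmidsum] at hA
        rw [hmidsq] at hB
        -- now boundary terms
        simp only [Nat.sub_zero, Nat.sub_self, pc_zero, sc_zero] at hA hB
        -- hA : (w - sc s m - 0) + X + (w - sc 0 - pc m) = ...
        set P := pc s m with hP
        set S := sc s m with hS
        set P' := pc v m with hP'
        set S' := sc v m with hS'
        set w := pc s s.length with hww
        have hsum : P + S = P' + S' := by linarith
        have hsq : (w - S) ^ 2 + (w - P) ^ 2 = (w - S') ^ 2 + (w - P') ^ 2 := by linarith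
        have hdomS : S ≤ P := hds m hm
        have hdomS' : S' ≤ P' := hdv m (by omega)
        have h2 : P ^ 2 + S ^ 2 = P' ^ 2 + S' ^ 2 := by
          linear_combination hsq + 2 * w * hsum
        have h3 : (P - S) ^ 2 = (P' - S') ^ 2 := by
          linear_combination 2 * h2 - (P + S + P' + S') * hsum
        have h4 : P - S = P' - S' := sq_cancel (by linarith) (by linarith) h3
        constructor
        · linarith
        · linarith
  apply eq_of_pc_eq s v hn
  intro m
  rcases le_or_gt m s.length with h | h
  · exact (main m h).1
  · rw [pc_stable s (by omega), pc_stable v (by omega), hv]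
    exact (main s.length le_rfl).1

/-! ### pair lists and their walks -/

def val (P : List (Bool × Bool)) : ℤ :=
  ((P.map Prod.fst).count true : ℤ) - ((P.map Prod.snd).count true : ℤ)

def psum (P : List (Bool × Bool)) (m : ℕ) : ℤ := val (P.take m)

def GoodP (P : List (Bool × Bool)) : Prop := ∀ m ≤ P.length, 0 ≤ psum P m

instance : DecidablePred GoodP := fun P => by unfold GoodP; infer_instance

lemma val_append (a b : List (Bool × Bool)) : val (a ++ b) = val a + val b := by
  unfold val
  rw [List.map_append, List.map_append, List.count_append, List.count_append]
  push_cast; ring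

lemma psum_zero (P : List (Bool × Bool)) : psum P 0 = 0 := by
  simp [psum, val]

lemma psum_add (P : List (Bool × Bool)) (a b : ℕ) :
    psum P (a + b) = psum P a + psum (P.drop a) b := by
  unfold psum
  rw [List.take_add, val_append]

lemma psum_of_take {j τ : ℕ} (P : List (Bool × Bool)) (h : j ≤ τ) :
    psum (P.take τ) j = psum P j := by
  unfold psum
  rw [List.take_take, min_eq_left h]

lemma psum_big {m : ℕ} (P : List (Bool × Bool)) (h : P.length ≤ m) : psum P m = val P := by
  unfold psum
  rw [List.take_of_length_le h]

lemma goodP_all {P : List (Bool × Bool)} (h : GoodP P) : ∀ m, 0 ≤ psum P m := by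
  intro m
  rcases le_or_gt m P.length with hm | hm
  · exact h m hm
  · rw [psum_big P hm.le]
    have := h P.length le_rfl
    rwa [psum_big P le_rfl] at this

/-! ### the rotation argument -/

section rot
variable (L : List (Bool × Bool)) {N : ℕ}

/-- index of the first minimum of the prefix-sum walk -/
noncomputable def tau (L : List (Bool × Bool)) (N : ℕ) : ℕ :=
  Nat.find (p := fun m => ∀ j ≤ N, psum L m ≤ psum L j)
    (by
      obtain ⟨τ₀, hmem, hmin⟩ := Finset.exists_min_image (Finset.range (N + 1))
        (fun m => psum L m) ⟨0, by simp⟩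
      exact ⟨τ₀, fun j hj => hmin j (by simp; omega)⟩)

lemma tau_min (N : ℕ) : ∀ j ≤ N, psum L (tau L N) ≤ psum L j :=
  Nat.find_spec (p := fun m => ∀ j ≤ N, psum L m ≤ psum L j) _

lemma tau_first (N : ℕ) : ∀ i < tau L N, psum L (tau L N) < psum L i := by
  intro i hi
  have h : ¬ (∀ j ≤ N, psum L i ≤ psum L j) :=
    Nat.find_min (p := fun m => ∀ j ≤ N, psum L m ≤ psum L j)
    (by
      obtain ⟨τ₀, hmem, hmin⟩ := Finset.exists_min_image (Finset.range (N + 1))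
        (fun m => psum L m) ⟨0, by simp⟩
      exact ⟨τ₀, fun j hj => hmin j (by simp; omega)⟩) hi
  push_neg at h
  obtain ⟨j, hj, hlt⟩ := h
  calc psum L (tau L N) ≤ psum L j := tau_min L N j hj
    _ < psum L i := hlt

lemma tau_le (N : ℕ) : tau L N ≤ N := by
  obtain ⟨τ₀, hmem, hmin⟩ := Finset.exists_min_image (Finset.range (N + 1))
    (fun m => psum L m) ⟨0, by simp⟩
  have h1 : tau L N ≤ τ₀ :=
    Nat.find_min' (p := fun m => ∀ j ≤ N, psum L m ≤ psum L j) _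
      (fun j hj => hmin j (by simp; omega))
  simp only [Finset.mem_range] at hmem
  omega

lemma tau_lt (N : ℕ) (hN : 1 ≤ N) (hval : 0 ≤ psum L N) : tau L N < N := by
  rcases eq_or_lt_of_le (tau_le L N) with heq | h
  · exfalso
    have h0 := tau_first L N 0 (by omega)
    rw [psum_zero] at h0
    have := tau_min L N N le_rfl
    rw [heq] at h0
    linarith
  · exact h

end rot

lemma rotate_good {N : ℕ} (L : List (Bool × Bool)) (hL : L.length = N)
    (hval : 0 ≤ val L) (hN : 1 ≤ N) :
    GoodP (L.drop (tau L N) ++ L.take (tau L N)) := by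
  set τ := tau L N with hτ
  have hτN : τ ≤ N := tau_le L N
  have hmin := tau_min L N
  intro m _
  rcases le_or_gt m (N - τ) with hm | hm
  · have hlen : (L.drop τ).length = N - τ := by rw [List.length_drop, hL]
    have h1 : psum (L.drop τ ++ L.take τ) m = psum (L.drop τ) m := by
      unfold psum
      rw [List.take_append_of_le_length (by omega)]
    have h2 : psum L (τ + m) = psum L τ + psum (L.drop τ) m := psum_add L τ m
    have h3 : psum L τ ≤ psum L (τ + m) := hmin _ (by omega)
    rw [h1]; linarith
  · have hlen : (L.drop τ).length = N - τ := by rw [List.length_drop, hL]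
    have hm' : m = (N - τ) + (m - (N - τ)) := by omega
    rw [hm', psum_add]
    have h1 : psum (L.drop τ ++ L.take τ) (N - τ) = val (L.drop τ) := by
      unfold psum
      rw [← hlen, List.take_left]
    have h2 : (L.drop τ ++ L.take τ).drop (N - τ) = L.take τ := by
      rw [← hlen, List.drop_left]
    rw [h1, h2]
    set j := m - (N - τ) with hj
    have hval' : val (L.drop τ) = val L - psum L τ := by
      have : val L = psum L τ + val (L.drop τ) := by
        have := psum_add L τ (N - τ)
        rw [psum_big L (by omega), psum_big (L.drop τ) (by omega)] at this
        linarith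
      linarith
    rcases le_or_gt j τ with hjτ | hjτ
    · rw [psum_of_take L hjτ]
      have : psum L τ ≤ psum L j := hmin j (by omega)
      have hvL : 0 ≤ val L := hval
      linarith
    · rw [psum_big (L.take τ) (by rw [List.length_take]; omega)]
      have hrfl : val (L.take τ) = psum L τ := rfl
      linarith

/-! ### counting -/

def pairsF (N : ℕ) : Finset (List (Bool × Bool)) :=
  (Finset.univ : Finset (Fin N → Bool × Bool)).image List.ofFn

lemma mem_pairsF {N : ℕ} {P : List (Bool × Bool)} : P ∈ pairsF N ↔ P.length = N := by
  unfold pairsF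
  simp only [Finset.mem_image, Finset.mem_univ, true_and]
  constructor
  · rintro ⟨f, rfl⟩; simp
  · intro h
    subst h
    exact ⟨P.get, List.ofFn_get P⟩

lemma card_pairsF (N : ℕ) : (pairsF N).card = 4 ^ N := by
  unfold pairsF
  rw [Finset.card_image_of_injective _ List.ofFn_injective, Finset.card_univ]
  rw [Fintype.card_fun]
  simp

def negP (P : List (Bool × Bool)) : List (Bool × Bool) := P.map (fun p => (p.2, p.1))

lemma val_negP (P : List (Bool × Bool)) : val (negP P) = - val P := by
  unfold val negP
  rw [List.map_map, List.map_map]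
  have h1 : (Prod.fst ∘ fun p : Bool × Bool => (p.2, p.1)) = Prod.snd := rfl
  have h2 : (Prod.snd ∘ fun p : Bool × Bool => (p.2, p.1)) = Prod.fst := rfl
  rw [h1, h2]; ring

lemma negP_invol (P : List (Bool × Bool)) : negP (negP P) = P := by
  unfold negP
  rw [List.map_map]
  have : ((fun p : Bool × Bool => (p.2, p.1)) ∘ fun p : Bool × Bool => (p.2, p.1)) = id := rfl
  rw [this, List.map_id]

def goodF (N : ℕ) : Finset (List (Bool × Bool)) := (pairsF N).filter GoodP

lemma half_nonneg (N : ℕ) :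
    4 ^ N ≤ 2 * ((pairsF N).filter (fun P => 0 ≤ val P)).card := by
  classical
  set A := (pairsF N).filter (fun P => 0 ≤ val P) with hA
  set B := (pairsF N).filter (fun P => val P ≤ 0) with hB
  have hsub : pairsF N ⊆ A ∪ B := by
    intro P hP
    rw [Finset.mem_union, hA, hB, Finset.mem_filter, Finset.mem_filter]
    rcases le_or_gt 0 (val P) with h | h
    · exact Or.inl ⟨hP, h⟩
    · exact Or.inr ⟨hP, h.le⟩
  have hBA : B.card ≤ A.card := by
    apply Finset.card_le_card_of_injOn negP
    · intro P hP
      rw [hB, Finset.mem_coe, Finset.mem_filter] at hP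
      rw [hA, Finset.mem_coe, Finset.mem_filter]
      constructor
      · rw [mem_pairsF]
        unfold negP
        rw [List.length_map]
        exact mem_pairsF.mp hP.1
      · rw [val_negP]; linarith [hP.2]
    · intro P hP Q hQ hPQ
      have := congrArg negP hPQ
      rwa [negP_invol, negP_invol] at this
  calc 4 ^ N = (pairsF N).card := (card_pairsF N).symm
    _ ≤ (A ∪ B).card := Finset.card_le_card hsub
    _ ≤ A.card + B.card := Finset.card_union_le _ _
    _ ≤ 2 * A.card := by omega

lemma A_le_good {N : ℕ} (hN : 1 ≤ N) :
    ((pairsF N).filter (fun P => 0 ≤ val P)).card ≤ (goodF N).card * N := by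
  classical
  have key : ((pairsF N).filter (fun P => 0 ≤ val P)).card
      ≤ ((goodF N) ×ˢ Finset.range N).card := by
    apply Finset.card_le_card_of_injOn
      (fun L => (L.drop (tau L N) ++ L.take (tau L N), tau L N))
    · intro L hL
      rw [Finset.mem_coe, Finset.mem_filter, mem_pairsF] at hL
      obtain ⟨hlen, hval⟩ := hL
      have hvp : 0 ≤ psum L N := by rw [psum_big L (by omega)]; exact hval
      rw [Finset.mem_coe, Finset.mem_product]
      constructor
      · rw [goodF, Finset.mem_filter, mem_pairsF]
        constructor
        · rw [List.length_append, List.length_drop, List.length_take]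
          omega
        · exact rotate_good L hlen hval hN
      · rw [Finset.mem_range]
        exact tau_lt L N hN hvp
    · intro L hL L' hL' heq
      simp only [Prod.mk.injEq] at heq
      obtain ⟨h1, h2⟩ := heq
      rw [Finset.coe_filter, Set.mem_setOf_eq] at hL hL'
      have hlen : L.length = N := mem_pairsF.mp hL.1
      have hlen' : L'.length = N := mem_pairsF.mp hL'.1
      have hd : L.drop (tau L N) = L'.drop (tau L' N) ∧ L.take (tau L N) = L'.take (tau L' N) := by
        apply List.append_inj h1
        rw [List.length_drop, List.length_drop, hlen, hlen', h2]
      calc L = L.take (tau L N) ++ L.drop (tau L N) := (List.take_append_drop _ L).symm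
        _ = L'.take (tau L' N) ++ L'.drop (tau L' N) := by rw [hd.1, hd.2]
        _ = L' := List.take_append_drop _ L'
  rw [Finset.card_product, Finset.card_range] at key
  exact key

theorem good_count {N : ℕ} (hN : 1 ≤ N) : 4 ^ N ≤ 2 * N * (goodF N).card := by
  have h1 := half_nonneg N
  have h2 := A_le_good hN
  calc 4 ^ N ≤ 2 * ((pairsF N).filter (fun P => 0 ≤ val P)).card := h1
    _ ≤ 2 * ((goodF N).card * N) := by omega
    _ = 2 * N * (goodF N).card := by ring

/-! ### from pair lists to strings -/

def phi (P : List (Bool × Bool)) : List Bool :=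
  (P.map Prod.fst) ++ (P.map Prod.snd).reverse

lemma length_phi (P : List (Bool × Bool)) : (phi P).length = 2 * P.length := by
  unfold phi
  rw [List.length_append, List.length_map, List.length_reverse, List.length_map]
  ring

lemma pc_phi (P : List (Bool × Bool)) {m : ℕ} (hm : m ≤ P.length) :
    pc (phi P) m = (((P.take m).map Prod.fst).count true : ℤ) := by
  unfold pc phi
  rw [List.take_append_of_le_length (by rw [List.length_map]; omega), List.map_take]

lemma sc_phi (P : List (Bool × Bool)) {m : ℕ} (hm : m ≤ P.length) :
    sc (phi P) m = (((P.take m).map Prod.snd).count true : ℤ) := by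
  unfold sc phi
  have hlen : ((P.map Prod.fst) ++ (P.map Prod.snd).reverse).length = 2 * P.length := by
    rw [List.length_append, List.length_map, List.length_reverse, List.length_map]; ring
  rw [hlen]
  have hsplit : 2 * P.length - m = (P.map Prod.fst).length + (P.length - m) := by
    rw [List.length_map]; omega
  rw [hsplit, List.drop_length_add_append]
  have hrev : ((P.map Prod.snd).take m).reverse
      = (P.map Prod.snd).reverse.drop (P.length - m) := by
    rw [List.reverse_take, List.length_map]
  rw [← hrev, List.count_reverse, List.map_take]

lemma psum_phi (P : List (Bool × Bool)) {m : ℕ} (hm : m ≤ P.length) :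
    psum P m = pc (phi P) m - sc (phi P) m := by
  rw [pc_phi P hm, sc_phi P hm]
  rfl

lemma dominant_phi {P : List (Bool × Bool)} (h : GoodP P) : Dominant (phi P) := by
  intro m hm
  rw [length_phi] at hm
  rcases le_or_gt m P.length with h1 | h1
  · have := h m h1
    rw [psum_phi P h1] at this
    linarith
  · have hj : 2 * P.length - m ≤ P.length := by omega
    have hsym := dom_symm (phi P) (j := 2 * P.length - m) (by rw [length_phi]; omega)
    rw [length_phi] at hsym
    rw [show 2 * P.length - (2 * P.length - m) = m by omega] at hsym
    have := h (2 * P.length - m) hj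
    rw [psum_phi P hj] at this
    linarith

lemma phi_inj {P Q : List (Bool × Bool)} (hlen : P.length = Q.length)
    (h : phi P = phi Q) : P = Q := by
  unfold phi at h
  have hfst : P.map Prod.fst = Q.map Prod.fst ∧
      (P.map Prod.snd).reverse = (Q.map Prod.snd).reverse := by
    apply List.append_inj h
    rw [List.length_map, List.length_map, hlen]
  have h1 : P.map Prod.fst = Q.map Prod.fst := hfst.1
  have h2 : P.map Prod.snd = Q.map Prod.snd := List.reverse_injective hfst.2
  apply List.ext_getElem hlen
  intro i hi hi'
  have e1 : (P.map Prod.fst)[i]'(by rw [List.length_map]; exact hi)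
      = (Q.map Prod.fst)[i]'(by rw [List.length_map]; exact hi') := List.getElem_of_eq h1 _
  have e2 : (P.map Prod.snd)[i]'(by rw [List.length_map]; exact hi)
      = (Q.map Prod.snd)[i]'(by rw [List.length_map]; exact hi') := List.getElem_of_eq h2 _
  rw [List.getElem_map, List.getElem_map] at e1 e2
  exact Prod.ext e1 e2

/-- final counting result: many dominant strings of length `2N` -/
theorem dominant_count {N : ℕ} (hN : 1 ≤ N) :
    ∃ F : Finset (List Bool), (∀ s ∈ F, s.length = 2 * N ∧ Dominant s) ∧
      4 ^ N ≤ 2 * N * F.card := by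
  classical
  refine ⟨(goodF N).image phi, ?_, ?_⟩
  · intro s hs
    rw [Finset.mem_image] at hs
    obtain ⟨P, hP, rfl⟩ := hs
    rw [goodF, Finset.mem_filter, mem_pairsF] at hP
    constructor
    · rw [length_phi, hP.1]
    · exact dominant_phi hP.2
  · rw [Finset.card_image_of_injOn]
    · exact good_count hN
    · intro P hP Q hQ h
      simp only [Finset.coe_filter, Set.mem_setOf_eq, goodF] at hP hQ
      exact phi_inj (by rw [mem_pairsF.mp hP.1, mem_pairsF.mp hQ.1]) h


/-- the syndrome of a string: all the power-sum residues of the two statistics -/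
def synd (t n M : ℕ) (s : List Bool) : Fin (2 * t) → ℕ × ℕ :=
  fun j => ((∑ l ∈ Finset.Icc 1 n, cumW l s * l ^ (j : ℕ)) % M,
            (∑ l ∈ Finset.Icc 1 n, vW l s * l ^ (j : ℕ)) % M)

lemma powersum_zero {n M t : ℕ} (hn : 1 ≤ n) (hM : n ^ (2 * t + 3) < M)
    (F G : ℕ → ℕ) (hF : ∀ l ∈ Finset.Icc 1 n, F l ≤ n ^ 3)
    (hG : ∀ l ∈ Finset.Icc 1 n, G l ≤ n ^ 3) {j : ℕ} (hj : j < 2 * t)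
    (hmod : (∑ l ∈ Finset.Icc 1 n, F l * l ^ j) % M
      = (∑ l ∈ Finset.Icc 1 n, G l * l ^ j) % M) :
    ∑ l ∈ Finset.Icc 1 n, ((F l : ℤ) - G l) * (l : ℤ) ^ j = 0 := by
  have hbound : ∀ (H : ℕ → ℕ), (∀ l ∈ Finset.Icc 1 n, H l ≤ n ^ 3) →
      (∑ l ∈ Finset.Icc 1 n, H l * l ^ j) < M := by
    intro H hH
    calc ∑ l ∈ Finset.Icc 1 n, H l * l ^ j
        ≤ ∑ _l ∈ Finset.Icc 1 n, n ^ 3 * n ^ (2 * t - 1) := by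
          apply Finset.sum_le_sum
          intro l hl
          simp only [Finset.mem_Icc] at hl
          apply Nat.mul_le_mul (hH l (by simp [Finset.mem_Icc]; omega))
          calc l ^ j ≤ n ^ j := Nat.pow_le_pow_left hl.2 j
            _ ≤ n ^ (2 * t - 1) := Nat.pow_le_pow_right hn (by omega)
      _ = n * (n ^ 3 * n ^ (2 * t - 1)) := by
          rw [Finset.sum_const, smul_eq_mul, Nat.card_Icc]
          norm_num
      _ = n ^ (1 + 3 + (2 * t - 1)) := by
          rw [pow_add, pow_add, pow_one]
          ring
      _ = n ^ (2 * t + 3) := by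
          congr 1
          omega
      _ < M := hM
  have hFlt := hbound F hF
  have hGlt := hbound G hG
  have heq : (∑ l ∈ Finset.Icc 1 n, F l * l ^ j) = (∑ l ∈ Finset.Icc 1 n, G l * l ^ j) := by
    rwa [Nat.mod_eq_of_lt hFlt, Nat.mod_eq_of_lt hGlt] at hmod
  have : ∑ l ∈ Finset.Icc 1 n, ((F l : ℤ) - G l) * (l : ℤ) ^ j
      = (↑(∑ l ∈ Finset.Icc 1 n, F l * l ^ j) : ℤ) - ↑(∑ l ∈ Finset.Icc 1 n, G l * l ^ j) := by
    push_cast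
    rw [← Finset.sum_sub_distrib]
    apply Finset.sum_congr rfl
    intro l _
    ring
  rw [this, heq, sub_self]

theorem no_common_D {t n M : ℕ} (ht : 1 ≤ t) (hn : 1 ≤ n)
    (hM : n ^ (2 * t + 3) < M)
    {s v : List Bool} (hs : s.length = n) (hv : v.length = n)
    (hds : Dominant s) (hdv : Dominant v)
    (hsynd : synd t n M s = synd t n M v)
    (hne : s ≠ v) :
    ¬ ∃ D : Multiset (ℕ × ℕ), AtMostErr t (compMS s) D ∧ AtMostErr t (compMS v) D := by
  classical
  rintro ⟨D, h1, h2⟩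
  obtain ⟨S1, hS1c, hS1⟩ := err_classes h1
  obtain ⟨S2, hS2c, hS2⟩ := err_classes h2
  -- the two composition multisets agree on all classes outside S1 ∪ S2
  have hagree : ∀ l ∉ S1 ∪ S2, lenPart l (compMS s) = lenPart l (compMS v) := by
    intro l hl
    rw [Finset.mem_union, not_or] at hl
    rw [hS1 l hl.1, ← hS2 l hl.2]
  -- there is a statistic that differs somewhere
  have hdiff : ∃ l₀ ∈ Finset.Icc 1 n, cumW l₀ s ≠ cumW l₀ v ∨ vW l₀ s ≠ vW l₀ v := by
    by_contra hcon
    push_neg at hcon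
    apply hne
    apply unique_of_stats s v (by omega) hds hdv
    intro l hl1 hl2
    have := hcon l (by simp [Finset.mem_Icc]; omega)
    constructor
    · exact this.1
    · exact this.2
  obtain ⟨l₀, hl₀, hl₀d⟩ := hdiff
  -- pick the differing statistic as e
  obtain ⟨F, G, hFle, hGle, hsyndeq, hFG⟩ :
      ∃ F G : ℕ → ℕ, (∀ l ∈ Finset.Icc 1 n, F l ≤ n ^ 3) ∧
        (∀ l ∈ Finset.Icc 1 n, G l ≤ n ^ 3) ∧
        (∀ j : Fin (2 * t), (∑ l ∈ Finset.Icc 1 n, F l * l ^ (j : ℕ)) % M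
          = (∑ l ∈ Finset.Icc 1 n, G l * l ^ (j : ℕ)) % M) ∧
        (F l₀ ≠ G l₀ ∧ ∀ l, 1 ≤ l → l ≤ n →
          lenPart l (compMS s) = lenPart l (compMS v) → F l = G l) := by
    rcases hl₀d with hc | hc
    · refine ⟨fun l => cumW l s, fun l => cumW l v, ?_, ?_, ?_, hc, ?_⟩
      · intro l hl
        simp only [Finset.mem_Icc] at hl
        calc cumW l s ≤ s.length * s.length := cumW_le s hl.1
          _ ≤ n ^ 3 := by rw [hs]; nlinarith
      · intro l hl
        simp only [Finset.mem_Icc] at hl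
        calc cumW l v ≤ v.length * v.length := cumW_le v hl.1
          _ ≤ n ^ 3 := by rw [hv]; nlinarith
      · intro j
        have := congrFun hsynd j
        exact congrArg Prod.fst this
      · intro l h1' h2' hlp
        exact (stats_eq_of_lenPart_eq s v h1' (by omega) (by omega) hlp).1
    · refine ⟨fun l => vW l s, fun l => vW l v, ?_, ?_, ?_, hc, ?_⟩
      · intro l hl
        simp only [Finset.mem_Icc] at hl
        calc vW l s ≤ s.length * s.length * s.length := vW_le s hl.1
          _ ≤ n ^ 3 := by rw [hs]; ring_nf; omega
      · intro l hl
        simp only [Finset.mem_Icc] at hl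
        calc vW l v ≤ v.length * v.length * v.length := vW_le v hl.1
          _ ≤ n ^ 3 := by rw [hv]; ring_nf; omega
      · intro j
        have := congrFun hsynd j
        exact congrArg Prod.snd this
      · intro l h1' h2' hlp
        exact (stats_eq_of_lenPart_eq s v h1' (by omega) (by omega) hlp).2
  set e : ℕ → ℤ := fun l => (F l : ℤ) - G l with he
  set T : Finset ℕ := (Finset.Icc 1 n).filter (fun l => e l ≠ 0) with hT
  have hl₀T : l₀ ∈ T := by
    rw [hT, Finset.mem_filter]
    refine ⟨hl₀, ?_⟩
    rw [he]
    simp only [ne_eq, sub_eq_zero]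
    exact_mod_cast hFG.1
  -- power sums over T vanish
  have hTsum : ∀ j < 2 * t, ∑ l ∈ T, e l * (l : ℤ) ^ j = 0 := by
    intro j hj
    have hfull := powersum_zero hn hM F G hFle hGle hj (hsyndeq ⟨j, hj⟩)
    rw [← hfull]
    apply Finset.sum_subset (Finset.filter_subset _ _)
    intro x hx hnx
    have hx0 : e x = 0 := by
      by_contra hcon
      exact hnx (Finset.mem_filter.mpr ⟨hx, hcon⟩)
    rw [hx0, zero_mul]
  -- T must be large
  have hTcard : 2 * t + 1 ≤ T.card := by
    by_contra hcon
    push_neg at hcon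
    have := interpolation T e (by omega) hTsum l₀ hl₀T
    rw [hT, Finset.mem_filter] at hl₀T
    exact hl₀T.2 this
  -- but T is contained in S1 ∪ S2
  have hsub : T ⊆ S1 ∪ S2 := by
    intro l hl
    by_contra hcon
    rw [hT, Finset.mem_filter] at hl
    have hmem := hl.1
    simp only [Finset.mem_Icc] at hmem
    have := hFG.2 l hmem.1 hmem.2 (hagree l hcon)
    apply hl.2
    rw [he]
    simp only [sub_eq_zero]
    exact_mod_cast this
  have : T.card ≤ 2 * t := by
    calc T.card ≤ (S1 ∪ S2).card := Finset.card_le_card hsub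
      _ ≤ S1.card + S2.card := Finset.card_union_le _ _
      _ ≤ 2 * t := by omega
  omega


/-- the combinatorial code-existence statement -/
theorem code_exists {t N k : ℕ} (ht : 1 ≤ t) (hN : 1 ≤ N)
    (hcount : (2 * N) * (((2 * N) ^ (2 * t + 3) + 1) * ((2 * N) ^ (2 * t + 3) + 1)) ^ (2 * t)
      * 2 ^ k ≤ 2 ^ (2 * N)) :
    ∃ C : Set (List Bool),
      (∀ s ∈ C, s.length = 2 * N) ∧
      2 ^ k ≤ C.ncard ∧
      (∀ s ∈ C, ∀ v ∈ C, s ≠ v →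
        ¬ ∃ D : Multiset (ℕ × ℕ),
          AtMostErr t (compMS s) D ∧ AtMostErr t (compMS v) D) := by
  classical
  set n := 2 * N with hn
  set M := n ^ (2 * t + 3) + 1 with hMdef
  have hM0 : 0 < M := by positivity
  obtain ⟨F, hFmem, hFcard⟩ := dominant_count hN
  set target : Finset (Fin (2 * t) → ℕ × ℕ) :=
    Fintype.piFinset (fun _ => (Finset.range M) ×ˢ (Finset.range M)) with htarget
  have hmaps : ∀ s ∈ F, synd t n M s ∈ target := by
    intro s _
    rw [htarget, Fintype.mem_piFinset]
    intro j
    rw [Finset.mem_product, Finset.mem_range, Finset.mem_range]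
    exact ⟨Nat.mod_lt _ hM0, Nat.mod_lt _ hM0⟩
  have htne : target.Nonempty := by
    refine ⟨fun _ => (0, 0), ?_⟩
    rw [htarget, Fintype.mem_piFinset]
    intro j
    rw [Finset.mem_product]
    exact ⟨Finset.mem_range.mpr hM0, Finset.mem_range.mpr hM0⟩
  have htcard : target.card = (M * M) ^ (2 * t) := by
    rw [htarget, Fintype.card_piFinset]
    rw [Finset.prod_const, Finset.card_product, Finset.card_range,
      Finset.card_univ, Fintype.card_fin]
  have hpigeon : target.card * 2 ^ k ≤ F.card := by
    rw [htcard]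
    have h4 : 4 ^ N = 2 ^ n := by
      rw [hn, pow_mul]
      norm_num
    have h2N : 0 < 2 * N := by omega
    have := hcount
    rw [← h4] at this
    -- this : n * ((M*M)^(2t)) * 2^k ≤ 4^N ≤ 2N * F.card = n * F.card
    have h2 : n * ((M * M) ^ (2 * t) * 2 ^ k) ≤ n * F.card := by
      calc n * ((M * M) ^ (2 * t) * 2 ^ k) = n * (M * M) ^ (2 * t) * 2 ^ k := by ring
        _ ≤ 4 ^ N := this
        _ ≤ 2 * N * F.card := hFcard
        _ = n * F.card := by rw [hn]
    exact Nat.le_of_mul_le_mul_left h2 (by omega)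
  obtain ⟨y, hy, hfiber⟩ := Finset.exists_le_card_fiber_of_mul_le_card_of_maps_to
    hmaps htne hpigeon
  refine ⟨↑(F.filter (fun s => synd t n M s = y)), ?_, ?_, ?_⟩
  · intro s hs
    simp only [Finset.coe_filter, Set.mem_setOf_eq] at hs
    exact (hFmem s hs.1).1
  · rw [Set.ncard_coe_finset]
    exact hfiber
  · intro s hs v hv hne
    simp only [Finset.coe_filter, Set.mem_setOf_eq] at hs hv
    have hsd := hFmem s hs.1
    have hvd := hFmem v hv.1
    exact no_common_D ht (by omega) (lt_add_one _)
      hsd.1 hvd.1 hsd.2 hvd.2 (by rw [hs.2, hv.2]) hne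

/-- `L^2 ≤ 2^L` for `L ≥ 4` -/
lemma sq_le_two_pow : ∀ L : ℕ, 4 ≤ L → L * L ≤ 2 ^ L := by
  intro L hL
  induction L with
  | zero => omega
  | succ n ih =>
    rcases Nat.lt_or_ge n 4 with h | h
    · interval_cases n <;> first | omega | norm_num
    · have h1 := ih (by omega)
      have h2 : (n + 1) * (n + 1) ≤ 2 * (n * n) := by nlinarith
      calc (n + 1) * (n + 1) ≤ 2 * (n * n) := h2
        _ ≤ 2 * 2 ^ n := by omega
        _ = 2 ^ (n + 1) := by rw [pow_succ]; ring


theorem main_statement :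
    ∃ c : ℝ, 0 < c ∧ ∀ t : ℕ, 1 ≤ t → ∃ k₀ : ℕ, ∀ k : ℕ, k₀ ≤ k →
      ∃ n : ℕ, (n : ℝ) ≤ (k : ℝ) + c * (t : ℝ) ^ 2 * Real.logb 2 (k : ℝ) ∧
        ∃ C : Set (List Bool),
          (∀ s ∈ C, s.length = n) ∧
          2 ^ k ≤ C.ncard ∧
          (∀ s ∈ C, ∀ v ∈ C, s ≠ v →
            ¬ ∃ D : Multiset (ℕ × ℕ),
              AtMostErr t (compMS s) D ∧ AtMostErr t (compMS v) D) := by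
  refine ⟨1000, by norm_num, ?_⟩
  intro t ht
  refine ⟨2 ^ (3200 * t * t), ?_⟩
  intro k hk
  have hk0 : k ≠ 0 := by
    have h1 : 1 ≤ 2 ^ (3200 * t * t) := Nat.one_le_two_pow
    omega
  set L := Nat.log 2 k with hL
  have htt : 3200 ≤ 3200 * t * t := by nlinarith
  have hLge : 3200 * t * t ≤ L := by
    rw [hL]
    exact (Nat.le_log_iff_pow_le one_lt_two hk0).mpr hk
  have hL32 : 32 ≤ L := by omega
  have h2L : 2 ^ L ≤ k := Nat.pow_log_le_self 2 hk0
  have hk2 : k < 2 ^ (L + 1) := Nat.lt_pow_succ_log_self one_lt_two k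
  set B := 200 * t * t * (L + 1) with hB
  have hd : 200 * t * t ≤ L / 16 := by
    apply (Nat.le_div_iff_mul_le (by norm_num)).mpr
    have e : 200 * t * t * 16 = 3200 * t * t := by ring
    omega
  have h16d : 16 * (L / 16) ≤ L := by omega
  have hBL : B + 2 ≤ L * L := by
    have h1 : B ≤ (L / 16) * (L + 1) := Nat.mul_le_mul_right _ hd
    have h2 : 16 * ((L / 16) * (L + 1)) ≤ L * (L + 1) := by
      calc 16 * ((L / 16) * (L + 1)) = (16 * (L / 16)) * (L + 1) := by ring
        _ ≤ L * (L + 1) := Nat.mul_le_mul_right _ h16d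
    nlinarith
  have hBk : B + 2 ≤ k := le_trans hBL (le_trans (sq_le_two_pow L (by omega)) h2L)
  set N := (k + B) / 2 + 1 with hN
  have hN1 : 1 ≤ N := by omega
  set n := 2 * N with hn
  have hnk1 : k + B + 1 ≤ n := by omega
  have hnk2 : n ≤ k + B + 2 := by omega
  have hcount : n * ((n ^ (2 * t + 3) + 1) * (n ^ (2 * t + 3) + 1)) ^ (2 * t)
      * 2 ^ k ≤ 2 ^ n := by
    set M := n ^ (2 * t + 3) + 1 with hM
    have hn2 : 2 ≤ n := by omega
    have hp1 : 1 ≤ n ^ (2 * t + 3) := Nat.one_le_pow _ _ (by omega)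
    have hMn : M ≤ n ^ (2 * t + 4) := by
      have e1 : n ^ (2 * t + 4) = n ^ (2 * t + 3) * n := pow_succ n (2 * t + 3)
      have h2p : n ^ (2 * t + 3) * 2 ≤ n ^ (2 * t + 3) * n := Nat.mul_le_mul_left _ hn2
      omega
    have key1 : n * (M * M) ^ (2 * t) ≤ n ^ ((2 * t + 4 + (2 * t + 4)) * (2 * t) + 1) := by
      calc n * (M * M) ^ (2 * t)
          ≤ n * (n ^ (2 * t + 4) * n ^ (2 * t + 4)) ^ (2 * t) :=
            Nat.mul_le_mul_left _ (Nat.pow_le_pow_left (Nat.mul_le_mul hMn hMn) _)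
        _ = n ^ ((2 * t + 4 + (2 * t + 4)) * (2 * t) + 1) := by
            rw [← pow_add, ← pow_mul, ← pow_succ']
    have hE25 : (2 * t + 4 + (2 * t + 4)) * (2 * t) + 1 ≤ 25 * t * t := by nlinarith
    have key3 : n ≤ 2 ^ (L + 2) := by
      have e : 2 ^ (L + 2) = 2 * 2 ^ (L + 1) := by rw [pow_succ]; ring
      omega
    have key5 : (L + 2) * (25 * t * t) + k ≤ n := by
      have h1 : (L + 2) * 25 ≤ 200 * (L + 1) := by omega
      have h2 : ((L + 2) * 25) * (t * t) ≤ (200 * (L + 1)) * (t * t) :=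
        Nat.mul_le_mul_right _ h1
      have e1 : (L + 2) * (25 * t * t) = ((L + 2) * 25) * (t * t) := by ring
      have e2 : (200 * (L + 1)) * (t * t) = B := by rw [hB]; ring
      omega
    calc n * (M * M) ^ (2 * t) * 2 ^ k
        ≤ n ^ ((2 * t + 4 + (2 * t + 4)) * (2 * t) + 1) * 2 ^ k :=
          Nat.mul_le_mul_right _ key1
      _ ≤ n ^ (25 * t * t) * 2 ^ k :=
          Nat.mul_le_mul_right _ (Nat.pow_le_pow_right (by omega) hE25)
      _ ≤ (2 ^ (L + 2)) ^ (25 * t * t) * 2 ^ k :=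
          Nat.mul_le_mul_right _ (Nat.pow_le_pow_left key3 _)
      _ = 2 ^ ((L + 2) * (25 * t * t) + k) := by rw [← pow_mul, ← pow_add]
      _ ≤ 2 ^ n := Nat.pow_le_pow_right (by omega) key5
  obtain ⟨C, hC1, hC2, hC3⟩ := code_exists ht hN1 hcount
  refine ⟨n, ?_, C, hC1, hC2, hC3⟩
  -- the real bound
  have hk2' : (2 : ℝ) ≤ (k : ℝ) := by
    have : 2 ≤ k := by omega
    exact_mod_cast this
  have hlogb2 : Real.logb 2 2 = 1 := by
    simp [Real.logb_self_eq_one]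
  have hlogbL : (L : ℝ) ≤ Real.logb 2 k := by
    have h1 : ((2 : ℝ)) ^ (L : ℕ) ≤ (k : ℝ) := by exact_mod_cast h2L
    have h2 : Real.logb 2 ((2 : ℝ) ^ (L : ℕ)) ≤ Real.logb 2 k :=
      Real.logb_le_logb_of_le (by norm_num) (by positivity) h1
    rwa [Real.logb_pow, hlogb2, mul_one] at h2
  have hlogb1 : (1 : ℝ) ≤ Real.logb 2 k := by
    have h2 : Real.logb 2 2 ≤ Real.logb 2 k :=
      Real.logb_le_logb_of_le (by norm_num) (by norm_num) hk2'
    rwa [hlogb2] at h2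
  have htR : (1 : ℝ) ≤ (t : ℝ) := by exact_mod_cast ht
  have hnle : (n : ℝ) ≤ (k : ℝ) + (B : ℝ) + 2 := by exact_mod_cast hnk2
  have hBcast : (B : ℝ) = 200 * (t : ℝ) * (t : ℝ) * ((L : ℝ) + 1) := by
    rw [hB]; push_cast; ring
  set x := Real.logb 2 k with hx
  have e1 : 200 * (t : ℝ) * (t : ℝ) * ((L : ℝ) + 1) ≤ 200 * (t : ℝ) * (t : ℝ) * (2 * x) := by
    apply mul_le_mul_of_nonneg_left (by linarith) (by positivity)
  have e2 : (1 : ℝ) ≤ (t : ℝ) * (t : ℝ) * x := by nlinarith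
  have e3 : (0 : ℝ) ≤ (t : ℝ) * (t : ℝ) * x := by positivity
  have : (B : ℝ) + 2 ≤ 1000 * (t : ℝ) ^ 2 * x := by
    rw [hBcast]
    nlinarith [e1, e2, e3]
  linarith


end CompCode

/-- There is an absolute constant `c > 0` such that for every `t ≥ 1`
there is `k₀(t)` such that for all `k ≥ k₀(t)` there exist `n ≤ k + c·t²·log₂ k` and a
code `C ⊆ {0,1}ⁿ` with `|C| ≥ 2^k` correcting any `t` (symmetric) composition errors. -/
theorem symmetric_t_error_code_exists :
    ∃ c : ℝ, 0 < c ∧ ∀ t : ℕ, 1 ≤ t → ∃ k₀ : ℕ, ∀ k : ℕ, k₀ ≤ k →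
      ∃ n : ℕ, (n : ℝ) ≤ (k : ℝ) + c * (t : ℝ) ^ 2 * Real.logb 2 (k : ℝ) ∧
        ∃ C : Set (List Bool),
          (∀ s ∈ C, s.length = n) ∧
          2 ^ k ≤ C.ncard ∧
          (∀ s ∈ C, ∀ v ∈ C, s ≠ v →
            ¬ ∃ D : Multiset (ℕ × ℕ),
              AtMostErr t (compMS s) D ∧ AtMostErr t (compMS v) D) :=
  CompCode.main_statement
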